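/- Let C_δ be a lower semilinear copula with diagonal δ, and let (u,v) ∈ [0,1]² with v ≤ u ≤ 1−v. Then (1−u−v)(1−v) ≤ C_δ(1−v,1−u) − C_δ(u,v) ≤ 1 − u − uv/(1−v). -/
import Mathlib


def IsDiagonal (d : ℝ → ℝ) : Prop :=
  d 0 = 0 ∧ d 1 = 1 ∧ MonotoneOn d (Set.Icc 0 1) ∧
  (∀ t ∈ Set.Icc (0:ℝ) 1, d t ≤ t) ∧
  (∀ s ∈ Set.Icc (0:ℝ) 1, ∀ t ∈ Set.Icc (0:ℝ) 1, |d s - d t| ≤ 2 * |s - t|)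

def IsSemilinearDiagonal (d : ℝ → ℝ) : Prop :=
  IsDiagonal d ∧ MonotoneOn (fun x => d x / x) (Set.Ioc (0:ℝ) 1) ∧
  AntitoneOn (fun x => d x / x ^ 2) (Set.Ioc (0:ℝ) 1)

/-- The lower semilinear construction (note `0/0 = 0` in Lean). -/
noncomputable def semilinear (d : ℝ → ℝ) (u v : ℝ) : ℝ :=
  min u v * d (max u v) / max u v

theorem opposite_diagonal_asymmetry_bounds (d : ℝ → ℝ) (hd : IsSemilinearDiagonal d)
    (u v : ℝ) (hu : u ∈ Set.Icc (0:ℝ) 1) (hv : v ∈ Set.Icc (0:ℝ) 1)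
    (hvu : v ≤ u) (huv : u ≤ 1 - v) :
    (1 - u - v) * (1 - v) ≤ semilinear d (1 - v) (1 - u) - semilinear d u v ∧
    semilinear d (1 - v) (1 - u) - semilinear d u v ≤ 1 - u - u * v / (1 - v) := by
  obtain ⟨⟨hd0, hd1, hmono, hdle, hlip⟩, hphi, hpsi⟩ := hd
  obtain ⟨hu0, hu1⟩ := hu
  obtain ⟨hv0, hv1⟩ := hv
  have h1v : (0:ℝ) < 1 - v := by linarith
  have h1u1v : 1 - u ≤ 1 - v := by linarith
  have hE1 : semilinear d (1 - v) (1 - u) = (1 - u) * d (1 - v) / (1 - v) := by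
    unfold semilinear
    rw [max_eq_left h1u1v, min_eq_right h1u1v]
  have hE2 : semilinear d u v = v * d u / u := by
    unfold semilinear
    rw [max_eq_left hvu, min_eq_right hvu]
  rw [hE1, hE2]
  rcases eq_or_lt_of_le hu0 with h | hu0'
  · -- u = 0, hence v = 0
    have hu' : u = 0 := h.symm
    have hv' : v = 0 := le_antisymm (hu' ▸ hvu) hv0
    subst hu'; subst hv'
    norm_num [hd1]
  · -- u > 0
    have hmemu : u ∈ Set.Ioc (0:ℝ) 1 := ⟨hu0', hu1⟩
    have hmem1v : (1 - v) ∈ Set.Ioc (0:ℝ) 1 := ⟨h1v, by linarith⟩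
    have hmem1 : (1:ℝ) ∈ Set.Ioc (0:ℝ) 1 := ⟨one_pos, le_refl 1⟩
    -- B ≥ (1-v)^2
    have hkey3 : d 1 / 1 ^ 2 ≤ d (1 - v) / (1 - v) ^ 2 := hpsi hmem1v hmem1 (by linarith)
    have hBge : (1 - v) ^ 2 ≤ d (1 - v) := by
      rw [hd1] at hkey3
      have := (div_le_div_iff₀ (by norm_num) (by positivity)).mp hkey3
      nlinarith
    have hBle : d (1 - v) ≤ 1 - v := hdle (1 - v) ⟨by linarith, by linarith⟩
    -- cross-multiplied key inequalities
    have hkey1 : d u / u ≤ d (1 - v) / (1 - v) := hphi hmemu hmem1v huv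
    have hk1 : d u * (1 - v) ≤ d (1 - v) * u :=
      (div_le_div_iff₀ hu0' h1v).mp hkey1
    have hkey2 : d (1 - v) / (1 - v) ^ 2 ≤ d u / u ^ 2 := hpsi hmemu hmem1v huv
    have hk2 : d (1 - v) * u ^ 2 ≤ d u * (1 - v) ^ 2 :=
      (div_le_div_iff₀ (by positivity) (by positivity)).mp hkey2
    have huvpos : (0:ℝ) < u * (1 - v) := by positivity
    constructor
    · rw [div_sub_div _ _ (ne_of_gt h1v) (ne_of_gt hu0'), le_div_iff₀ (by positivity : (0:ℝ) < (1 - v) * u)]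
      nlinarith [mul_nonneg (mul_nonneg (by linarith : (0:ℝ) ≤ 1 - u - v) hu0)
        (sub_nonneg.mpr hBge), mul_nonneg hv0 (sub_nonneg.mpr hk1)]
    · rw [div_sub_div _ _ (ne_of_gt h1v) (ne_of_gt hu0'), div_le_iff₀ (by positivity : (0:ℝ) < (1 - v) * u)]
      have heq : (1 - u - u * v / (1 - v)) * ((1 - v) * u) = (1 - u - v) * u := by
        field_simp; ring
      rw [heq]
      nlinarith [mul_nonneg hv0 (sub_nonneg.mpr hk2),
        mul_nonneg (mul_nonneg hu0 (by linarith : (0:ℝ) ≤ 1 - u - v))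
          (sub_nonneg.mpr hBle)]
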